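/- Let n, N, k be natural numbers with k ≥ 1. Let f : ℝⁿ → ℂ be of class C^k such that every partial derivative ∂^α f with |α| ≤ k has polynomial decay order N, and let g : ℝⁿ → ℂ be measurable with vanishing moments of order k and polynomial decay order N + k + n + 1. Then there exists a constant C, depending only on the decay constants of the ∂^α f and of g, such that for all x ∈ ℝⁿ and all 0 < t < 1: |(g * D_t f)(x)| ≤ C t^{k+n} (1 + t|x|)^{−N}. -/

import Mathlib

open MeasureTheory

/-- The `L¹`-normalized dilation `D_t f (x) = tⁿ f(t • x)` on `ℝⁿ`. -/
noncomputable def dil (n : ℕ) (t : ℝ) (f : EuclideanSpace ℝ (Fin n) → ℂ) :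
    EuclideanSpace ℝ (Fin n) → ℂ :=
  fun x => (t : ℂ) ^ n * f (t • x)

/-- Convolution `(f * g)(x) = ∫ f(y) g(x − y) dy` on `ℝⁿ`. -/
noncomputable def conv (n : ℕ) (f g : EuclideanSpace ℝ (Fin n) → ℂ) :
    EuclideanSpace ℝ (Fin n) → ℂ :=
  fun x => ∫ y, f y * g (x - y)

/-- The monomial `x^α` associated to a multi-index `α`. -/
def mono (n : ℕ) (α : Fin n → ℕ) (x : EuclideanSpace ℝ (Fin n)) : ℂ :=
  ∏ i, (x i : ℂ) ^ (α i)

/-- `f` has vanishing moments of order `k`: `∫ f(x) x^α dx = 0`, with absolute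
convergence, for every multi-index `α` with `|α| ≤ k − 1`. -/
def VanishingMoments (n k : ℕ) (f : EuclideanSpace ℝ (Fin n) → ℂ) : Prop :=
  ∀ α : Fin n → ℕ, (∑ i, α i) + 1 ≤ k →
    Integrable (fun x => f x * mono n α x) ∧ (∫ x, f x * mono n α x) = 0

section aux

variable {E F : Type*} [NormedAddCommGroup E] [NormedSpace ℝ E]
  [NormedAddCommGroup F] [NormedSpace ℝ F]

lemma lineMap_hasDerivAt (c v : E) (s : ℝ) :
    HasDerivAt (fun u : ℝ => c + u • v) v s := by
  simpa using ((hasDerivAt_id s).smul_const v).const_add c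

lemma line_contDiff {k : WithTop ℕ∞} {f : E → F} (hf : ContDiff ℝ k f) (c v : E) :
    ContDiff ℝ k fun s : ℝ => f (c + s • v) :=
  hf.comp (contDiff_const.add (contDiff_id.smul contDiff_const))

lemma line_iteratedDeriv {k : ℕ} {f : E → F} (hf : ContDiff ℝ k f) (c v : E) :
    ∀ j : ℕ, j ≤ k → ∀ s : ℝ,
      iteratedDeriv j (fun u : ℝ => f (c + u • v)) s
        = iteratedFDeriv ℝ j f (c + s • v) (fun _ => v) := by
  intro j
  induction j with
  | zero => intro _ s; simp
  | succ j ih =>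
    intro hj s
    rw [iteratedDeriv_succ]
    have hfun : iteratedDeriv j (fun u : ℝ => f (c + u • v)) = fun u : ℝ =>
        (ContinuousMultilinearMap.apply ℝ (fun _ : Fin j => E) F (fun _ => v))
          (iteratedFDeriv ℝ j f (c + u • v)) := by
      funext u; exact ih (le_trans (Nat.le_succ j) hj) u
    rw [hfun]
    have hdiff : Differentiable ℝ (iteratedFDeriv ℝ j f) :=
      hf.differentiable_iteratedFDeriv (by exact_mod_cast Nat.lt_of_succ_le hj)
    have h3 : HasDerivAt (fun u : ℝ => iteratedFDeriv ℝ j f (c + u • v))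
        (fderiv ℝ (iteratedFDeriv ℝ j f) (c + s • v) v) s :=
      (hdiff (c + s • v)).hasFDerivAt.comp_hasDerivAt s (lineMap_hasDerivAt c v s)
    have h4 := ((ContinuousMultilinearMap.apply ℝ (fun _ : Fin j => E) F
        (fun _ => v)).hasFDerivAt.comp_hasDerivAt s h3)
    have h5 : HasDerivAt (fun u : ℝ =>
        (ContinuousMultilinearMap.apply ℝ (fun _ : Fin j => E) F (fun _ => v))
          (iteratedFDeriv ℝ j f (c + u • v)))
        ((fderiv ℝ (iteratedFDeriv ℝ j f) (c + s • v)) v (fun _ => v)) s := h4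
    rw [h5.deriv, iteratedFDeriv_succ_apply_left]
    rfl

lemma iteratedDerivWithin_eq_global {m k : ℕ} {φ : ℝ → F} (hφ : ContDiff ℝ (k : ℕ∞) φ)
    (hm : m ≤ k) {s : Set ℝ} (hs : UniqueDiffOn ℝ s) {x : ℝ} (hx : x ∈ s) :
    iteratedDerivWithin m φ s x = iteratedDeriv m φ x := by
  rw [iteratedDerivWithin_eq_iteratedFDerivWithin, iteratedDeriv_eq_iteratedFDeriv]
  have h := ((contDiff_iff_ftaylorSeries.mp hφ).hasFTaylorSeriesUpToOn
    s).eq_iteratedFDerivWithin_of_uniqueDiffOn (m := m) (by exact_mod_cast hm) hs hx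
  rw [← h]
  rfl

lemma rpow_neg_decay (N : ℕ) {a b c : ℝ} (ha : 0 ≤ a) (hb : 0 ≤ b) (hc : 0 ≤ c)
    (h : 1 + a ≤ (1 + b) * (1 + c)) :
    (1 + b) ^ (-(N : ℝ)) ≤ (1 + c) ^ (N : ℝ) * (1 + a) ^ (-(N : ℝ)) := by
  have pa : (0:ℝ) < (1 + a) ^ (N:ℝ) := Real.rpow_pos_of_pos (by linarith) _
  have pb : (0:ℝ) < (1 + b) ^ (N:ℝ) := Real.rpow_pos_of_pos (by linarith) _
  have pc : (0:ℝ) < (1 + c) ^ (N:ℝ) := Real.rpow_pos_of_pos (by linarith) _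
  have h1 : (1 + a) ^ (N:ℝ) ≤ (1 + b) ^ (N:ℝ) * (1 + c) ^ (N:ℝ) := by
    rw [← Real.mul_rpow (by linarith) (by linarith)]
    exact Real.rpow_le_rpow (by linarith) h (Nat.cast_nonneg N)
  rw [Real.rpow_neg (by linarith : (0:ℝ) ≤ 1 + b), Real.rpow_neg (by linarith : (0:ℝ) ≤ 1 + a)]
  rw [inv_le_iff_one_le_mul₀ pb]
  rw [show (1+c)^(N:ℝ) * ((1+a)^(N:ℝ))⁻¹ * (1+b)^(N:ℝ)
      = ((1+b)^(N:ℝ) * (1+c)^(N:ℝ)) / (1+a)^(N:ℝ) by ring]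
  rw [le_div_iff₀ pa, one_mul]
  exact h1

end aux

lemma euclid_sum_single {n : ℕ} (y : EuclideanSpace ℝ (Fin n)) :
    y = ∑ i : Fin n, y i • EuclideanSpace.single i (1 : ℝ) := by
  ext i0
  rw [WithLp.ofLp_sum, Finset.sum_apply]
  simp [EuclideanSpace.single_apply]

lemma multilinear_expand {n j : ℕ}
    (m : ContinuousMultilinearMap ℝ (fun _ : Fin j => EuclideanSpace ℝ (Fin n)) ℂ)
    (y : EuclideanSpace ℝ (Fin n)) :
    m (fun _ => y) = ∑ r : Fin j → Fin n,
      (∏ p, y (r p)) • m (fun p => EuclideanSpace.single (r p) (1 : ℝ)) := by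
  have h : m (fun _ : Fin j => ∑ i : Fin n, y i • EuclideanSpace.single i (1:ℝ))
      = ∑ r : Fin j → Fin n, m fun p => y (r p) • EuclideanSpace.single (r p) (1:ℝ) :=
    m.toMultilinearMap.map_sum (fun _ i => y i • EuclideanSpace.single i (1:ℝ))
  conv_lhs => rw [euclid_sum_single y]
  rw [h]
  refine Finset.sum_congr rfl fun r _ => ?_
  exact m.toMultilinearMap.map_smul_univ (fun p => y (r p))
    (fun p => EuclideanSpace.single (r p) (1:ℝ))

lemma prod_eq_mono {n j : ℕ} (r : Fin j → Fin n) (y : EuclideanSpace ℝ (Fin n)) :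
    ((∏ p, y (r p) : ℝ) : ℂ) = mono n (fun i => (Finset.univ.filter fun p => r p = i).card) y := by
  rw [mono]
  push_cast
  rw [← Finset.prod_fiberwise_of_maps_to (fun p _ => Finset.mem_univ (r p))
      (fun p => ((y (r p) : ℝ) : ℂ))]
  refine Finset.prod_congr rfl fun i _ => ?_
  rw [Finset.prod_congr rfl (fun p hp => show ((y (r p) : ℝ) : ℂ) = ((y i : ℝ) : ℂ) by
      rw [Finset.mem_filter] at hp; rw [hp.2]), Finset.prod_const]

lemma fiber_degree {n j : ℕ} (r : Fin j → Fin n) :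
    (∑ i : Fin n, (Finset.univ.filter fun p => r p = i).card) = j := by
  rw [← Finset.card_eq_sum_card_fiberwise (fun p _ => Finset.mem_univ (r p))]
  simp

theorem decay_conv_a (n N k : ℕ) (hk : 1 ≤ k)
    (f g : EuclideanSpace ℝ (Fin n) → ℂ)
    (hf : ContDiff ℝ k f) (Cf : ℝ)
    (hfd : ∀ i : ℕ, i ≤ k → ∀ x, ‖iteratedFDeriv ℝ i f x‖ ≤ Cf * (1 + ‖x‖) ^ (-(N : ℝ)))
    (hgm : Measurable g) (hgmom : VanishingMoments n k g) (Cg : ℝ)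
    (hgd : ∀ x, ‖g x‖ ≤ Cg * (1 + ‖x‖) ^ (-((N : ℝ) + k + n + 1))) :
    ∃ C : ℝ, ∀ (x : EuclideanSpace ℝ (Fin n)) (t : ℝ), 0 < t → t < 1 →
      ‖conv n g (dil n t f) x‖ ≤ C * t ^ (k + n) * (1 + t * ‖x‖) ^ (-(N : ℝ)) := by
  classical
  have hCf0 : 0 ≤ Cf := by
    have h := hfd 0 (Nat.zero_le k) 0
    simp only [norm_zero, add_zero, Real.one_rpow, mul_one] at h
    exact le_trans (norm_nonneg _) h
  have hkk : k - 1 + 1 = k := Nat.succ_pred_eq_of_pos hk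
  have hfrank : (Module.finrank ℝ (EuclideanSpace ℝ (Fin n)) : ℝ) = n := by
    simp [finrank_euclideanSpace]
  have hint1 : Integrable (fun y : EuclideanSpace ℝ (Fin n) => (1 + ‖y‖) ^ (-((n:ℝ)+1)))
      (volume) := by
    apply integrable_one_add_norm
    rw [hfrank]; linarith
  set I : ℝ := ∫ y : EuclideanSpace ℝ (Fin n), (1 + ‖y‖) ^ (-((n:ℝ)+1)) with hI
  refine ⟨Cg * Cf * (Nat.factorial (k-1) : ℝ)⁻¹ * I, fun x t ht ht1 => ?_⟩
  have ht0 : 0 ≤ t := ht.le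
  have hCg0 : 0 ≤ Cg := by
    have h := hgd 0
    simp only [norm_zero, add_zero, Real.one_rpow, mul_one] at h
    exact le_trans (norm_nonneg _) h
  set T : EuclideanSpace ℝ (Fin n) → ℂ := fun y =>
    ∑ j ∈ Finset.range k, ((Nat.factorial j : ℝ)⁻¹) •
      iteratedFDeriv ℝ j f (t • x) (fun _ : Fin j => (-t) • y) with hTdef
  have hTrep : (fun y => g y * ((t:ℂ)^n * T y)) = fun y =>
      ∑ j ∈ Finset.range k, ∑ r : Fin j → Fin n,
        ((t:ℂ)^n * ((Nat.factorial j : ℝ) : ℂ)⁻¹ * (-(t:ℂ))^j *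
          iteratedFDeriv ℝ j f (t • x) (fun p => EuclideanSpace.single (r p) (1:ℝ))) *
        (g y * mono n (fun i => (Finset.univ.filter fun p => r p = i).card) y) := by
    funext y
    simp only [hTdef, Finset.mul_sum]
    refine Finset.sum_congr rfl fun j hj => ?_
    have e1 : (iteratedFDeriv ℝ j f (t • x)) (fun _ : Fin j => (-t) • y)
        = ((-t)^j : ℝ) • (iteratedFDeriv ℝ j f (t • x)) (fun _ : Fin j => y) := by
      have h := (iteratedFDeriv ℝ j f (t • x)).toMultilinearMap.map_smul_univ
        (fun _ : Fin j => -t) (fun _ : Fin j => y)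
      simpa using h
    rw [e1, multilinear_expand]
    simp only [Finset.smul_sum, Finset.mul_sum]
    refine Finset.sum_congr rfl fun r _ => ?_
    simp only [smul_smul, Complex.real_smul, Complex.ofReal_mul, Complex.ofReal_inv,
      Complex.ofReal_pow, Complex.ofReal_neg, Complex.ofReal_natCast]
    rw [prod_eq_mono]
    ring
  have hdeg : ∀ j, j ∈ Finset.range k → ∀ r : Fin j → Fin n,
      (∑ i, (Finset.univ.filter fun p => r p = i).card) + 1 ≤ k := by
    intro j hj r
    rw [fiber_degree]
    exact Finset.mem_range.mp hj
  have hint_main : Integrable (fun y => g y * ((t:ℂ)^n * T y)) := by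
    rw [hTrep]
    exact integrable_finset_sum _ (fun j hj => integrable_finset_sum _ (fun r _ =>
      ((hgmom _ (hdeg j hj r)).1).const_mul _))
  have hzero : (∫ y, g y * ((t:ℂ)^n * T y)) = 0 := by
    rw [hTrep, integral_finset_sum _ (fun j hj => integrable_finset_sum _ (fun r _ =>
      ((hgmom _ (hdeg j hj r)).1).const_mul _))]
    refine Finset.sum_eq_zero fun j hj => ?_
    rw [integral_finset_sum _ (fun r _ => ((hgmom _ (hdeg j hj r)).1).const_mul _)]
    refine Finset.sum_eq_zero fun r _ => ?_
    rw [integral_const_mul, (hgmom _ (hdeg j hj r)).2, mul_zero]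
  have hTay : ∀ y : EuclideanSpace ℝ (Fin n), ‖f (t • (x - y)) - T y‖ ≤
      (Cf * ((1+‖y‖)^(N:ℝ) * (1+t*‖x‖)^(-(N:ℝ))) * (t*‖y‖)^k) *
        (Nat.factorial (k-1) : ℝ)⁻¹ := by
    intro y
    set v : EuclideanSpace ℝ (Fin n) := (-t) • y with hv
    set φ : ℝ → ℂ := fun s => f (t • x + s • v) with hφ
    have hφC : ContDiff ℝ (k : WithTop ℕ∞) φ := by
      rw [hφ]; exact line_contDiff hf _ _
    have hφC' : ContDiff ℝ ((k : ℕ∞) : WithTop ℕ∞) φ := by exact_mod_cast hφC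
    have hv_norm : ‖v‖ = t * ‖y‖ := by
      rw [hv, norm_smul]
      simp [abs_of_pos ht]
    have hCy : ∀ u ∈ Set.Icc (0:ℝ) 1,
        ‖iteratedDerivWithin (k-1+1) φ (Set.Icc 0 1) u‖ ≤
          Cf * ((1+‖y‖)^(N:ℝ) * (1+t*‖x‖)^(-(N:ℝ))) * (t*‖y‖)^k := by
      intro u hu
      rw [hkk, iteratedDerivWithin_eq_global hφC' le_rfl (uniqueDiffOn_Icc one_pos) hu,
        hφ, line_iteratedDeriv hf (t • x) v k le_rfl u]
      have hz : 1 + t*‖x‖ ≤ (1 + ‖t • x + u • v‖) * (1 + ‖y‖) := by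
        have e2 : t • x = (t • x + u • v) - u • v := by abel
        have h1 : t*‖x‖ ≤ ‖t • x + u • v‖ + ‖y‖ := by
          have huv : ‖u • v‖ ≤ ‖y‖ := by
            rw [norm_smul, hv_norm, Real.norm_eq_abs, abs_of_nonneg hu.1]
            calc u * (t * ‖y‖) ≤ 1 * (1 * ‖y‖) := by
                  apply mul_le_mul hu.2 (mul_le_mul ht1.le le_rfl (norm_nonneg y) zero_le_one)
                    (mul_nonneg ht0 (norm_nonneg y)) zero_le_one
              _ = ‖y‖ := by ring
          calc t*‖x‖ = ‖t • x‖ := by rw [norm_smul]; simp [abs_of_pos ht]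
            _ = ‖(t • x + u • v) - u • v‖ := by rw [← e2]
            _ ≤ ‖t • x + u • v‖ + ‖u • v‖ := norm_sub_le _ _
            _ ≤ ‖t • x + u • v‖ + ‖y‖ := by linarith
        nlinarith [norm_nonneg (t • x + u • v), norm_nonneg y]
      have hkey := rpow_neg_decay N (mul_nonneg ht0 (norm_nonneg x)) (norm_nonneg _)
        (norm_nonneg y) hz
      refine le_trans (ContinuousMultilinearMap.le_opNorm _ _) ?_
      rw [Finset.prod_const, hv_norm, Finset.card_univ, Fintype.card_fin]
      refine le_trans (mul_le_mul_of_nonneg_right (hfd k le_rfl _)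
        (pow_nonneg (mul_nonneg ht0 (norm_nonneg y)) k)) ?_
      exact mul_le_mul_of_nonneg_right (mul_le_mul_of_nonneg_left hkey hCf0)
        (pow_nonneg (mul_nonneg ht0 (norm_nonneg y)) k)
    have hCD : ContDiffOn ℝ ((k-1:ℕ) + 1) φ (Set.Icc (0:ℝ) 1) := by
      have hcast : ((k-1:ℕ) : WithTop ℕ∞) + 1 = (k : WithTop ℕ∞) := by exact_mod_cast hkk
      rw [hcast]
      exact hφC.contDiffOn
    have hmain := taylor_mean_remainder_bound (f := φ) (a := 0) (b := 1) (x := 1) (n := k-1)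
      zero_le_one hCD (Set.mem_Icc.mpr ⟨zero_le_one, le_rfl⟩) hCy
    have hφ1 : φ 1 = f (t • (x - y)) := by
      simp only [hφ]
      congr 1
      rw [one_smul, hv, neg_smul, smul_sub]
      abel
    have hTexp : taylorWithinEval φ (k-1) (Set.Icc 0 1) 0 1 = T y := by
      rw [taylor_within_apply, hkk, hTdef]
      refine Finset.sum_congr rfl fun i hi => ?_
      have hik : i ≤ k := (Finset.mem_range.mp hi).le
      rw [iteratedDerivWithin_eq_global hφC' hik (uniqueDiffOn_Icc one_pos)
        (Set.mem_Icc.mpr ⟨le_rfl, zero_le_one⟩), hφ, line_iteratedDeriv hf (t • x) v i hik 0,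
        zero_smul, add_zero, ← hv]
      norm_num [one_div]
    rw [← hφ1, ← hTexp]
    refine le_trans hmain ?_
    rw [hkk]
    norm_num [div_eq_mul_inv]
  have hpow_t : ‖(t:ℂ)^n‖ = t^n := by
    rw [norm_pow]
    simp [Complex.norm_real, Real.norm_eq_abs, abs_of_pos ht]
  set G0 : EuclideanSpace ℝ (Fin n) → ℂ := fun y => g y * ((t:ℂ)^n * f (t • (x - y))) with hG0
  have hG0meas : AEStronglyMeasurable G0 volume := by
    apply AEStronglyMeasurable.mul hgm.aestronglyMeasurable
    apply AEStronglyMeasurable.const_mul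
    exact (hf.continuous.comp
      ((continuous_const.sub continuous_id).const_smul t)).aestronglyMeasurable
  have hNkn1 : Integrable (fun y : EuclideanSpace ℝ (Fin n) =>
      Cg * Cf * (1 + ‖y‖) ^ (-((N:ℝ)+k+n+1))) volume := by
    apply Integrable.const_mul
    apply integrable_one_add_norm
    rw [hfrank]
    push_cast
    linarith
  have hG0int : Integrable G0 := by
    refine hNkn1.mono' hG0meas (ae_of_all _ fun y => ?_)
    simp only [hG0]
    rw [norm_mul, norm_mul, hpow_t]
    have h1 := hgd y
    have h2 := hfd 0 (Nat.zero_le k) (t • (x - y))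
    rw [norm_iteratedFDeriv_zero] at h2
    have h3 : ‖f (t • (x - y))‖ ≤ Cf := by
      refine le_trans h2 ?_
      calc Cf * (1+‖t • (x - y)‖)^(-(N:ℝ)) ≤ Cf * 1 := by
            apply mul_le_mul_of_nonneg_left _ hCf0
            exact Real.rpow_le_one_of_one_le_of_nonpos
              (by linarith [norm_nonneg (t • (x - y))]) (by simp)
        _ = Cf := mul_one Cf
    have h4 : t^n ≤ 1 := pow_le_one₀ ht0 ht1.le
    calc ‖g y‖ * (t^n * ‖f (t • (x - y))‖)
        ≤ (Cg * (1 + ‖y‖) ^ (-((N:ℝ)+k+n+1))) * (1 * Cf) := by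
          apply mul_le_mul h1 (mul_le_mul h4 h3 (norm_nonneg _) zero_le_one)
            (mul_nonneg (pow_nonneg ht0 n) (norm_nonneg _))
            (mul_nonneg hCg0 (Real.rpow_nonneg (by linarith [norm_nonneg y]) _))
      _ = Cg * Cf * (1 + ‖y‖) ^ (-((N:ℝ)+k+n+1)) := by ring
  have hRint : Integrable (fun y => g y * ((t:ℂ)^n * (f (t • (x - y)) - T y))) := by
    have heq : (fun y => g y * ((t:ℂ)^n * (f (t • (x - y)) - T y)))
        = fun y => G0 y - g y * ((t:ℂ)^n * T y) := by
      funext y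
      simp only [hG0]
      ring
    rw [heq]
    exact hG0int.sub hint_main
  have hconv : conv n g (dil n t f) x = ∫ y, g y * ((t:ℂ)^n * (f (t • (x - y)) - T y)) := by
    have h0 : conv n g (dil n t f) x = ∫ y, G0 y := rfl
    have h5 : ∫ y, G0 y = (∫ y, g y * ((t:ℂ)^n * T y))
        + ∫ y, g y * ((t:ℂ)^n * (f (t • (x - y)) - T y)) := by
      rw [← integral_add hint_main hRint]
      refine integral_congr_ae (Filter.Eventually.of_forall fun y => ?_)
      simp only [hG0]
      ring
    rw [h0, h5, hzero, zero_add]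
  rw [hconv]
  set K0 : ℝ := Cg * Cf * (Nat.factorial (k-1) : ℝ)⁻¹ *
    (t^(k+n) * (1+t*‖x‖)^(-(N:ℝ))) with hK0
  have hbint : Integrable (fun y : EuclideanSpace ℝ (Fin n) =>
      K0 * (1+‖y‖)^(-((n:ℝ)+1))) := hint1.const_mul K0
  refine le_trans (norm_integral_le_of_norm_le hbint (ae_of_all _ fun y => ?_)) ?_
  · have hA : (0:ℝ) < 1 + ‖y‖ := by linarith [norm_nonneg y]
    have h1 := hgd y
    have h2 := hTay y
    rw [norm_mul, norm_mul, hpow_t]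
    calc ‖g y‖ * (t^n * ‖f (t • (x - y)) - T y‖)
        ≤ (Cg * (1+‖y‖)^(-((N:ℝ)+k+n+1))) *
          (t^n * ((Cf * ((1+‖y‖)^(N:ℝ) * (1+t*‖x‖)^(-(N:ℝ))) * (t*‖y‖)^k) *
            (Nat.factorial (k-1):ℝ)⁻¹)) := by
          apply mul_le_mul h1 (mul_le_mul_of_nonneg_left h2 (pow_nonneg ht0 n))
            (mul_nonneg (pow_nonneg ht0 n) (norm_nonneg _))
            (mul_nonneg hCg0 (Real.rpow_nonneg hA.le _))
      _ ≤ (Cg * (1+‖y‖)^(-((N:ℝ)+k+n+1))) *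
          (t^n * ((Cf * ((1+‖y‖)^(N:ℝ) * (1+t*‖x‖)^(-(N:ℝ))) * (t*(1+‖y‖))^k) *
            (Nat.factorial (k-1):ℝ)⁻¹)) := by
          apply mul_le_mul_of_nonneg_left _ (mul_nonneg hCg0 (Real.rpow_nonneg hA.le _))
          apply mul_le_mul_of_nonneg_left _ (pow_nonneg ht0 n)
          apply mul_le_mul_of_nonneg_right _ (by positivity)
          apply mul_le_mul_of_nonneg_left _
            (mul_nonneg hCf0 (mul_nonneg (Real.rpow_nonneg hA.le _)
              (Real.rpow_nonneg (by positivity) _)))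
          exact pow_le_pow_left₀ (mul_nonneg ht0 (norm_nonneg y))
            (mul_le_mul_of_nonneg_left (by linarith) ht0) k
      _ = K0 * ((1+‖y‖)^(-((N:ℝ)+k+n+1)) * ((1+‖y‖)^(N:ℝ) * (1+‖y‖)^((k:ℝ)))) := by
          rw [hK0, mul_pow, ← Real.rpow_natCast (1+‖y‖) k]
          ring
      _ = K0 * (1+‖y‖)^(-((n:ℝ)+1)) := by
          rw [← Real.rpow_add hA, ← Real.rpow_add hA]
          congr 1
          push_cast
          ring
  · rw [integral_const_mul, ← hI]
    exact le_of_eq (by rw [hK0]; ring)
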